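/- Let f, g be twice differentiable on [a,b] with f(a) = g(a) = 0, g > 0 on (a,b], and g' > 0 on [a,b]. Suppose there exists p ∈ (a,b) such that f'/g' is increasing on [a,p] and decreasing on [p,b]. If Y_{f,g}(b) ≤ 0, where Y_{f,g}(x) = (f'(x)/g'(x))·g(x) − f(x), then there exists x_p ∈ [a,b] such that f/g is increasing on (a,x_p] and decreasing on [x_p,b]. -/

import Mathlib

open Set

theorem third_kind_rule_piecewise (a b : ℝ) (hab : a < b) (f g : ℝ → ℝ)
    (hf : ∀ x ∈ Icc a b, DifferentiableAt ℝ f x)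
    (hg : ∀ x ∈ Icc a b, DifferentiableAt ℝ g x)
    (hf' : ∀ x ∈ Icc a b, DifferentiableAt ℝ (deriv f) x)
    (hg'' : ∀ x ∈ Icc a b, DifferentiableAt ℝ (deriv g) x)
    (hfa : f a = 0) (hga : g a = 0)
    (hgpos : ∀ x ∈ Ioc a b, 0 < g x)
    (hg' : ∀ x ∈ Icc a b, 0 < deriv g x)
    (p : ℝ) (hp : p ∈ Ioo a b)
    (hmono : MonotoneOn (fun x => deriv f x / deriv g x) (Icc a p))
    (hanti : AntitoneOn (fun x => deriv f x / deriv g x) (Icc p b))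
    (hYb : deriv f b / deriv g b * g b - f b ≤ 0) :
    ∃ xp ∈ Icc a b,
      MonotoneOn (fun x => f x / g x) (Ioc a xp) ∧
      AntitoneOn (fun x => f x / g x) (Icc xp b) := by
  set r : ℝ → ℝ := fun x => deriv f x / deriv g x with hrdef
  set Y : ℝ → ℝ := fun x => r x * g x - f x with hYdef
  have hgne : ∀ x ∈ Icc a b, deriv g x ≠ 0 := fun x hx => (hg' x hx).ne'
  have hgnonneg : ∀ x ∈ Icc a b, 0 ≤ g x := by
    intro x hx
    rcases eq_or_lt_of_le hx.1 with h | h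
    · rw [← h, hga]
    · exact (hgpos x ⟨h, hx.2⟩).le
  have hfc : ContinuousOn f (Icc a b) := fun x hx => (hf x hx).continuousAt.continuousWithinAt
  have hgc : ContinuousOn g (Icc a b) := fun x hx => (hg x hx).continuousAt.continuousWithinAt
  have hYc : ContinuousOn Y (Icc a b) := by
    apply ContinuousOn.sub _ hfc
    apply ContinuousOn.mul _ hgc
    exact ContinuousOn.div
      (fun x hx => (hf' x hx).continuousAt.continuousWithinAt)
      (fun x hx => (hg'' x hx).continuousAt.continuousWithinAt)
      hgne
  -- key slope identity via Cauchy MVT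
  have key : ∀ x ∈ Icc a b, ∀ y ∈ Icc a b, x < y →
      ∃ c ∈ Ioo x y, Y y - Y x = g y * (r y - r c) + g x * (r c - r x) := by
    intro x hx y hy hxy
    have hsub : Icc x y ⊆ Icc a b := Icc_subset_Icc hx.1 hy.2
    have hsub' : Ioo x y ⊆ Icc a b := fun z hz => hsub (Ioo_subset_Icc_self hz)
    obtain ⟨c, hc, hcc⟩ := exists_ratio_deriv_eq_ratio_slope f hxy (hfc.mono hsub)
      (fun z hz => (hf z (hsub' hz)).differentiableWithinAt)
      g (hgc.mono hsub)
      (fun z hz => (hg z (hsub' hz)).differentiableWithinAt)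
    refine ⟨c, hc, ?_⟩
    have hgc0 : deriv g c ≠ 0 := hgne c (hsub' hc)
    have hfy : f y - f x = r c * (g y - g x) := by
      have h1 : r c * (g y - g x) = (g y - g x) * deriv f c / deriv g c := by
        simp only [hrdef]; ring
      rw [h1, eq_div_iff hgc0]
      linarith [hcc]
    simp only [hYdef]
    rw [show r y * g y - f y - (r x * g x - f x)
        = r y * g y - r x * g x - (f y - f x) by ring, hfy]
    ring
  have hmonoY : MonotoneOn Y (Icc a p) := by
    intro x hx y hy hxy
    rcases eq_or_lt_of_le hxy with rfl | hlt
    · exact le_refl _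
    have hIap : Icc a p ⊆ Icc a b := Icc_subset_Icc le_rfl hp.2.le
    obtain ⟨c, hc, hcc⟩ := key x (hIap hx) y (hIap hy) hlt
    have hcmem : c ∈ Icc a p := ⟨hx.1.trans hc.1.le, hc.2.le.trans hy.2⟩
    have h1 : r x ≤ r c := hmono hx hcmem hc.1.le
    have h2 : r c ≤ r y := hmono hcmem hy hc.2.le
    have hgx : 0 ≤ g x := hgnonneg x (hIap hx)
    have hgy : 0 ≤ g y := hgnonneg y (hIap hy)
    nlinarith
  have hantiY : AntitoneOn Y (Icc p b) := by
    intro x hx y hy hxy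
    rcases eq_or_lt_of_le hxy with rfl | hlt
    · exact le_refl _
    have hIpb : Icc p b ⊆ Icc a b := Icc_subset_Icc hp.1.le le_rfl
    obtain ⟨c, hc, hcc⟩ := key x (hIpb hx) y (hIpb hy) hlt
    have hcmem : c ∈ Icc p b := ⟨hx.1.trans hc.1.le, hc.2.le.trans hy.2⟩
    have h1 : r c ≤ r x := hanti hx hcmem hc.1.le
    have h2 : r y ≤ r c := hanti hcmem hy hc.2.le
    have hgx : 0 ≤ g x := hgnonneg x (hIpb hx)
    have hgy : 0 ≤ g y := hgnonneg y (hIpb hy)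
    nlinarith
  have hYa : Y a = 0 := by simp [hYdef, hga, hfa]
  have hYb' : Y b ≤ 0 := hYb
  have hYp : 0 ≤ Y p := by
    have := hmonoY (left_mem_Icc.2 hp.1.le) (right_mem_Icc.2 hp.1.le) hp.1.le
    rw [hYa] at this
    exact this
  -- IVT on [p, b]
  have hpb : p ≤ b := hp.2.le
  have hivt := intermediate_value_Icc' hpb (hYc.mono (Icc_subset_Icc hp.1.le le_rfl))
  obtain ⟨xp, hxp, hYxp⟩ := hivt ⟨hYb', hYp⟩
  have hxpab : xp ∈ Icc a b := ⟨hp.1.le.trans hxp.1, hxp.2⟩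
  have haxp : a < xp := hp.1.trans_le hxp.1
  have hYnonneg : ∀ x ∈ Ico a xp, 0 ≤ Y x := by
    intro x hx
    rcases le_total x p with h | h
    · have := hmonoY (left_mem_Icc.2 hp.1.le) ⟨hx.1, h⟩ hx.1
      rwa [hYa] at this
    · have := hantiY ⟨h, (hx.2.le.trans hxp.2)⟩ hxp hx.2.le
      rw [hYxp] at this
      exact this
  have hYnonpos : ∀ x ∈ Icc xp b, Y x ≤ 0 := by
    intro x hx
    have := hantiY hxp ⟨hxp.1.trans hx.1, hx.2⟩ hx.1
    rw [hYxp] at this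
    exact this
  -- derivative of f/g
  have hderiv : ∀ x ∈ Ioo a b, deriv (fun x => f x / g x) x = Y x * deriv g x / (g x) ^ 2 := by
    intro x hx
    have hx' : x ∈ Icc a b := Ioo_subset_Icc_self hx
    have hgx : g x ≠ 0 := (hgpos x ⟨hx.1, hx.2.le⟩).ne'
    have h := ((hf x hx').hasDerivAt.div (hg x hx').hasDerivAt hgx)
    rw [show (fun y => f y / g y) = f / g from rfl, h.deriv]
    have hfr : deriv f x = r x * deriv g x := by
      simp only [hrdef]
      rw [div_mul_cancel₀ _ (hgne x hx')]
    rw [hfr]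
    simp only [hYdef]
    ring
  have hdiffFG : ∀ x ∈ Ioo a b, DifferentiableAt ℝ (fun x => f x / g x) x := by
    intro x hx
    have hx' : x ∈ Icc a b := Ioo_subset_Icc_self hx
    exact (hf x hx').div (hg x hx') (hgpos x ⟨hx.1, hx.2.le⟩).ne'
  refine ⟨xp, hxpab, ?_, ?_⟩
  · -- monotone on (a, xp]
    have hsub : Ioc a xp ⊆ Icc a b := fun z hz => ⟨hz.1.le, hz.2.trans hxpab.2⟩
    apply monotoneOn_of_deriv_nonneg (convex_Ioc a xp)
    · exact ((hfc.mono hsub).div (hgc.mono hsub)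
        (fun z hz => (hgpos z ⟨hz.1, (hsub hz).2⟩).ne'))
    · rw [interior_Ioc]
      intro x hx
      exact (hdiffFG x ⟨hx.1, hx.2.trans_le hxpab.2⟩).differentiableWithinAt
    · rw [interior_Ioc]
      intro x hx
      have hx' : x ∈ Ioo a b := ⟨hx.1, hx.2.trans_le hxpab.2⟩
      rw [hderiv x hx']
      exact div_nonneg (mul_nonneg (hYnonneg x ⟨hx.1.le, hx.2⟩)
        (hg' x (Ioo_subset_Icc_self hx')).le) (sq_nonneg _)
  · -- antitone on [xp, b]
    have hsub : Icc xp b ⊆ Icc a b := Icc_subset_Icc hxpab.1 le_rfl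
    apply antitoneOn_of_deriv_nonpos (convex_Icc xp b)
    · exact ((hfc.mono hsub).div (hgc.mono hsub)
        (fun z hz => (hgpos z ⟨haxp.trans_le hz.1, hz.2⟩).ne'))
    · rw [interior_Icc]
      intro x hx
      exact (hdiffFG x ⟨haxp.trans hx.1, hx.2⟩).differentiableWithinAt
    · rw [interior_Icc]
      intro x hx
      have hx' : x ∈ Ioo a b := ⟨haxp.trans hx.1, hx.2⟩
      rw [hderiv x hx']
      have hYle : Y x ≤ 0 := hYnonpos x ⟨hx.1.le, hx.2.le⟩
      have := (hg' x (Ioo_subset_Icc_self hx')).le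
      exact div_nonpos_of_nonpos_of_nonneg (mul_nonpos_of_nonpos_of_nonneg hYle this)
        (sq_nonneg _)
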